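/- Let Γ ∈ ℝ^{p×m} have rank r, and let β > 0 satisfy β‖P_Γ(Δ)‖_F ≤ ‖Δ‖_{L2(Π)} for all Δ ∈ K(Γ; 3). Then every Δ ∈ K(Γ; 3) satisfies ‖Δ‖_* ≤ (4√(2r)/β) ‖Δ‖_{L2(Π)}. -/

import Mathlib

open Matrix MeasureTheory
open scoped BigOperators

noncomputable section

/-- Frobenius norm. -/
def froNorm {n m : ℕ} (A : Matrix (Fin n) (Fin m) ℝ) : ℝ :=
  Real.sqrt (∑ i, ∑ j, (A i j) ^ 2)

/-- Nuclear norm: sum of singular values (= sqrt of eigenvalues of AᵀA). -/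
def nucNorm {n m : ℕ} (A : Matrix (Fin n) (Fin m) ℝ) : ℝ :=
  ∑ j, Real.sqrt (((by simpa only [Matrix.conjTranspose_eq_transpose_of_trivial] using
    Matrix.isHermitian_conjTranspose_mul_self A : (Aᵀ * A).IsHermitian)).eigenvalues j)

/-- ‖S‖_{L2(Π)} = sqrt( m⁻¹ E_Π ‖SᵀX‖₂² ). -/
def L2Pi {p m : ℕ} (Pix : Measure (Fin p → ℝ)) (S : Matrix (Fin p) (Fin m) ℝ) : ℝ :=
  Real.sqrt ((m : ℝ)⁻¹ * ∫ x, (∑ j, (∑ k, x k * S k j) ^ 2) ∂Pix)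

/-- P_Γ^⊥(S) = (I − P₁) S (I − P₂). -/
def Pperp {p m : ℕ} (P₁ : Matrix (Fin p) (Fin p) ℝ) (P₂ : Matrix (Fin m) (Fin m) ℝ)
    (S : Matrix (Fin p) (Fin m) ℝ) : Matrix (Fin p) (Fin m) ℝ :=
  (1 - P₁) * S * (1 - P₂)

/-- P_Γ(S) = S − (I − P₁) S (I − P₂). -/
def Pproj {p m : ℕ} (P₁ : Matrix (Fin p) (Fin p) ℝ) (P₂ : Matrix (Fin m) (Fin m) ℝ)
    (S : Matrix (Fin p) (Fin m) ℝ) : Matrix (Fin p) (Fin m) ℝ :=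
  S - Pperp P₁ P₂ S

/-- The cone K(Γ; c₀) = {S : ‖P_Γ^⊥(S)‖_* ≤ c₀‖P_Γ(S)‖_*}. -/
def coneK {p m : ℕ} (P₁ : Matrix (Fin p) (Fin p) ℝ) (P₂ : Matrix (Fin m) (Fin m) ℝ)
    (c₀ : ℝ) : Set (Matrix (Fin p) (Fin m) ℝ) :=
  {S | nucNorm (Pperp P₁ P₂ S) ≤ c₀ * nucNorm (Pproj P₁ P₂ S)}


theorem Matrix.isHermitian_transpose_mul_self {n m : ℕ} (A : Matrix (Fin n) (Fin m) ℝ) :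
    (Aᵀ * A).IsHermitian := by
  simpa only [Matrix.conjTranspose_eq_transpose_of_trivial] using
    Matrix.isHermitian_conjTranspose_mul_self A

namespace NucProof

variable {p m : ℕ}

/-- eigenvector basis of AᵀA as plain functions -/
def ebv (A : Matrix (Fin p) (Fin m) ℝ) (k : Fin m) : Fin m → ℝ :=
  ⇑((Matrix.isHermitian_transpose_mul_self A).eigenvectorBasis k)

def evl (A : Matrix (Fin p) (Fin m) ℝ) (k : Fin m) : ℝ :=
  (Matrix.isHermitian_transpose_mul_self A).eigenvalues k

lemma orth (A : Matrix (Fin p) (Fin m) ℝ) (k l : Fin m) :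
    ∑ i, ebv A k i * ebv A l i = if k = l then 1 else 0 := by
  have h1 : star ((Matrix.isHermitian_transpose_mul_self A).eigenvectorUnitary :
      Matrix (Fin m) (Fin m) ℝ) * ((Matrix.isHermitian_transpose_mul_self A).eigenvectorUnitary :
      Matrix (Fin m) (Fin m) ℝ) = 1 :=
    Matrix.mem_unitaryGroup_iff'.mp (Matrix.isHermitian_transpose_mul_self A).eigenvectorUnitary.2
  have h2 := congrFun (congrFun h1 k) l
  simpa [Matrix.mul_apply, Matrix.one_apply, Matrix.star_eq_conjTranspose,
    Matrix.conjTranspose_apply, ebv, Matrix.IsHermitian.eigenvectorUnitary_apply] using h2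

lemma complete (A : Matrix (Fin p) (Fin m) ℝ) (i i' : Fin m) :
    ∑ k, ebv A k i * ebv A k i' = if i = i' then 1 else 0 := by
  have h1 : ((Matrix.isHermitian_transpose_mul_self A).eigenvectorUnitary :
      Matrix (Fin m) (Fin m) ℝ) * star ((Matrix.isHermitian_transpose_mul_self A).eigenvectorUnitary :
      Matrix (Fin m) (Fin m) ℝ) = 1 :=
    Matrix.mem_unitaryGroup_iff.mp (Matrix.isHermitian_transpose_mul_self A).eigenvectorUnitary.2
  have h2 := congrFun (congrFun h1 i) i'
  simpa [Matrix.mul_apply, Matrix.one_apply, Matrix.star_eq_conjTranspose,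
    Matrix.conjTranspose_apply, ebv, Matrix.IsHermitian.eigenvectorUnitary_apply] using h2

lemma eig (A : Matrix (Fin p) (Fin m) ℝ) (k : Fin m) :
    (Aᵀ * A) *ᵥ ebv A k = evl A k • ebv A k :=
  (Matrix.isHermitian_transpose_mul_self A).mulVec_eigenvectorBasis k

/-- expand dotProduct of images -/
lemma av_dot (A : Matrix (Fin p) (Fin m) ℝ) (w u : Fin m → ℝ) :
    ∑ i, (A *ᵥ w) i * (A *ᵥ u) i = ∑ j, w j * ((Aᵀ * A) *ᵥ u) j := by
  have h : (A *ᵥ w) ⬝ᵥ (A *ᵥ u) = w ⬝ᵥ ((Aᵀ * A) *ᵥ u) := by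
    rw [← Matrix.mulVec_mulVec]
    conv_rhs => rw [Matrix.dotProduct_mulVec, Matrix.vecMul_transpose]
  simpa [dotProduct] using h

lemma av_dot_eig (A : Matrix (Fin p) (Fin m) ℝ) (k l : Fin m) :
    ∑ i, (A *ᵥ ebv A k) i * (A *ᵥ ebv A l) i = if k = l then evl A l else 0 := by
  rw [av_dot, eig]
  have : ∑ j, ebv A k j * (evl A l • ebv A l) j = evl A l * ∑ j, ebv A k j * ebv A l j := by
    rw [Finset.mul_sum]; exact Finset.sum_congr rfl fun j _ => by simp [mul_comm, mul_assoc, mul_left_comm]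
  rw [this, orth]
  by_cases h : k = l <;> simp [h]

lemma evl_nonneg (A : Matrix (Fin p) (Fin m) ℝ) (k : Fin m) : 0 ≤ evl A k := by
  have h := av_dot_eig A k k
  rw [if_pos rfl] at h
  rw [← h]
  exact Finset.sum_nonneg fun i _ => mul_self_nonneg _

/-- key pairing identity : only uses completeness -/
lemma pair (A M N : Matrix (Fin p) (Fin m) ℝ) :
    ∑ k, ∑ i, (M *ᵥ ebv A k) i * (N *ᵥ ebv A k) i = ∑ i, ∑ j, M i j * N i j := by
  have step : ∀ k i, (M *ᵥ ebv A k) i * (N *ᵥ ebv A k) i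
      = ∑ j, ∑ l, (M i j * N i l) * (ebv A k j * ebv A k l) := by
    intro k i
    simp only [Matrix.mulVec, dotProduct, Finset.sum_mul_sum]
    exact Finset.sum_congr rfl fun j _ => Finset.sum_congr rfl fun l _ => by ring
  simp only [step]
  rw [Finset.sum_comm]
  refine Finset.sum_congr rfl fun i _ => ?_
  rw [Finset.sum_comm]
  refine Finset.sum_congr rfl fun j _ => ?_
  rw [Finset.sum_comm]
  have : ∀ l, ∑ k, M i j * N i l * (ebv A k j * ebv A k l)
      = (M i j * N i l) * (if j = l then 1 else 0) := by
    intro l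
    rw [← complete A j l, Finset.mul_sum]
  simp only [this, mul_ite, mul_one, mul_zero]
  simp [Finset.sum_ite_eq]

lemma cs (x y : Fin p → ℝ) :
    ∑ i, x i * y i ≤ Real.sqrt (∑ i, x i ^ 2) * Real.sqrt (∑ i, y i ^ 2) := by
  refine le_trans (le_abs_self _) ?_
  rw [← Real.sqrt_sq_eq_abs, ← Real.sqrt_mul (Finset.sum_nonneg fun i _ => sq_nonneg _)]
  exact Real.sqrt_le_sqrt (Finset.sum_mul_sq_le_sq_mul_sq _ _ _)

lemma sq_expand (A : Matrix (Fin p) (Fin m) ℝ) (t : Fin m → ℝ) :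
    ∑ i, (∑ k, t k * (A *ᵥ ebv A k) i) ^ 2 = ∑ k, t k ^ 2 * evl A k := by
  have step : ∀ i : Fin p, (∑ k, t k * (A *ᵥ ebv A k) i) ^ 2
      = ∑ k, ∑ l, (t k * t l) * ((A *ᵥ ebv A k) i * (A *ᵥ ebv A l) i) := by
    intro i
    rw [sq, Finset.sum_mul_sum]
    exact Finset.sum_congr rfl fun k _ => Finset.sum_congr rfl fun l _ => by ring
  simp only [step]
  rw [Finset.sum_comm]
  refine Finset.sum_congr rfl fun k _ => ?_
  rw [Finset.sum_comm]
  have inner : ∀ l, ∑ i, t k * t l * ((A *ᵥ ebv A k) i * (A *ᵥ ebv A l) i)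
      = (t k * t l) * (if k = l then evl A l else 0) := by
    intro l
    rw [← av_dot_eig A k l, Finset.mul_sum]
  simp only [inner, mul_ite, mul_zero]
  rw [Finset.sum_ite_eq (Finset.univ) k (fun l => t k * t l * evl A l)]
  simp [sq]

lemma parseval (A : Matrix (Fin p) (Fin m) ℝ) (w : Fin m → ℝ) :
    ∑ k, (∑ i, ebv A k i * w i) ^ 2 = ∑ i, w i ^ 2 := by
  have step : ∀ k : Fin m, (∑ i, ebv A k i * w i) ^ 2
      = ∑ i, ∑ i', (w i * w i') * (ebv A k i * ebv A k i') := by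
    intro k
    rw [sq, Finset.sum_mul_sum]
    exact Finset.sum_congr rfl fun i _ => Finset.sum_congr rfl fun i' _ => by ring
  simp only [step]
  rw [Finset.sum_comm]
  refine Finset.sum_congr rfl fun i _ => ?_
  rw [Finset.sum_comm]
  have inner : ∀ i', ∑ k, w i * w i' * (ebv A k i * ebv A k i')
      = (w i * w i') * (if i = i' then 1 else 0) := by
    intro i'
    rw [← complete A i i', Finset.mul_sum]
  simp only [inner, mul_ite, mul_one, mul_zero]
  rw [Finset.sum_ite_eq (Finset.univ) i (fun i' => w i * w i')]
  simp [sq]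

lemma dual_le (A Q : Matrix (Fin p) (Fin m) ℝ)
    (hQ : ∀ w : Fin m → ℝ, ∑ i, (Q *ᵥ w) i ^ 2 ≤ ∑ j, w j ^ 2) :
    ∑ i, ∑ j, Q i j * A i j ≤ ∑ k, Real.sqrt (evl A k) := by
  rw [← pair A Q A]
  apply Finset.sum_le_sum
  intro k _
  have h2 : ∑ i, (A *ᵥ ebv A k) i ^ 2 = evl A k := by
    have h := av_dot_eig A k k; rw [if_pos rfl] at h
    simpa [sq] using h
  have h1 : ∑ i, (Q *ᵥ ebv A k) i ^ 2 ≤ 1 := by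
    have ha := hQ (ebv A k)
    have hv : ∑ j, (ebv A k) j ^ 2 = 1 := by
      have h := orth A k k; rw [if_pos rfl] at h
      simpa [sq] using h
    linarith
  calc ∑ i, (Q *ᵥ ebv A k) i * (A *ᵥ ebv A k) i
      ≤ Real.sqrt (∑ i, (Q *ᵥ ebv A k) i ^ 2) * Real.sqrt (∑ i, (A *ᵥ ebv A k) i ^ 2) := cs _ _
    _ ≤ 1 * Real.sqrt (evl A k) := by
        rw [h2]
        exact mul_le_mul_of_nonneg_right (Real.sqrt_le_one.mpr h1) (Real.sqrt_nonneg _)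
    _ = Real.sqrt (evl A k) := one_mul _

lemma exists_dual (A : Matrix (Fin p) (Fin m) ℝ) :
    ∃ Q : Matrix (Fin p) (Fin m) ℝ,
      (∀ w : Fin m → ℝ, ∑ i, (Q *ᵥ w) i ^ 2 ≤ ∑ j, w j ^ 2) ∧
      ∑ i, ∑ j, Q i j * A i j = ∑ k, Real.sqrt (evl A k) := by
  set c : Fin m → ℝ := fun k => (Real.sqrt (evl A k))⁻¹ with hc
  have hc2 : ∀ k, c k ^ 2 * evl A k ≤ 1 := by
    intro k
    by_cases h : evl A k = 0
    · simp [h]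
    · have hck : c k ^ 2 = (evl A k)⁻¹ := by
        rw [hc]; simp only
        rw [← Real.sqrt_inv, Real.sq_sqrt (inv_nonneg.mpr (evl_nonneg A k))]
      rw [hck, inv_mul_cancel₀ h]
  have hce : ∀ k, c k * evl A k = Real.sqrt (evl A k) := by
    intro k
    by_cases h : evl A k = 0
    · simp [hc, h]
    · have hpos : 0 < evl A k := lt_of_le_of_ne (evl_nonneg A k) (Ne.symm h)
      have hs : Real.sqrt (evl A k) ≠ 0 := ne_of_gt (Real.sqrt_pos.mpr hpos)
      rw [hc]; show (Real.sqrt (evl A k))⁻¹ * evl A k = Real.sqrt (evl A k)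
      rw [inv_mul_eq_div, div_eq_iff hs]
      exact (Real.mul_self_sqrt (evl_nonneg A k)).symm
  set Q : Matrix (Fin p) (Fin m) ℝ := fun i j => ∑ k, c k * (A *ᵥ ebv A k) i * ebv A k j
    with hQdef
  have hQw : ∀ (w : Fin m → ℝ) (i : Fin p), (Q *ᵥ w) i
      = ∑ k, (c k * ∑ j, ebv A k j * w j) * (A *ᵥ ebv A k) i := by
    intro w i
    show (∑ j, Q i j * w j) = _
    have hswap : (∑ j, Q i j * w j) = ∑ k, ∑ j, (c k * (A *ᵥ ebv A k) i * ebv A k j) * w j := by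
      rw [hQdef]
      simp only [Finset.sum_mul]
      rw [Finset.sum_comm]
    rw [hswap]
    refine Finset.sum_congr rfl fun k _ => ?_
    rw [Finset.mul_sum, Finset.sum_mul]
    exact Finset.sum_congr rfl fun j _ => by ring
  refine ⟨Q, ?_, ?_⟩
  · intro w
    simp only [hQw]
    rw [sq_expand A (fun k => c k * ∑ j, ebv A k j * w j)]
    calc ∑ k, (c k * ∑ j, ebv A k j * w j) ^ 2 * evl A k
        ≤ ∑ k, (∑ j, ebv A k j * w j) ^ 2 := by
          apply Finset.sum_le_sum
          intro k _
          have hexp : (c k * ∑ j, ebv A k j * w j) ^ 2 * evl A k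
              = (c k ^ 2 * evl A k) * (∑ j, ebv A k j * w j) ^ 2 := by ring
          rw [hexp]
          calc (c k ^ 2 * evl A k) * (∑ j, ebv A k j * w j) ^ 2
              ≤ 1 * (∑ j, ebv A k j * w j) ^ 2 :=
                mul_le_mul_of_nonneg_right (hc2 k) (sq_nonneg _)
            _ = _ := one_mul _
      _ = ∑ j, w j ^ 2 := parseval A w
  · rw [← pair A Q A]
    have hQv : ∀ (l : Fin m) (i : Fin p), (Q *ᵥ ebv A l) i = c l * (A *ᵥ ebv A l) i := by
      intro l i
      rw [hQw]
      have horth : ∀ k : Fin m, (∑ j, ebv A k j * ebv A l j) = if k = l then 1 else 0 :=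
        fun k => orth A k l
      simp only [horth, mul_ite, mul_one, mul_zero, ite_mul, zero_mul]
      rw [Finset.sum_ite_eq' Finset.univ l (fun k => c k * (A *ᵥ ebv A k) i)]
      simp
    calc ∑ l, ∑ i, (Q *ᵥ ebv A l) i * (A *ᵥ ebv A l) i
        = ∑ l, c l * evl A l := by
          refine Finset.sum_congr rfl fun l _ => ?_
          simp only [hQv]
          calc ∑ i, c l * (A *ᵥ ebv A l) i * (A *ᵥ ebv A l) i
              = c l * ∑ i, (A *ᵥ ebv A l) i * (A *ᵥ ebv A l) i := by
                rw [Finset.mul_sum]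
                exact Finset.sum_congr rfl fun i _ => by ring
            _ = c l * evl A l := by
                have h := av_dot_eig A l l
                rw [if_pos rfl] at h
                rw [h]
      _ = ∑ l, Real.sqrt (evl A l) := Finset.sum_congr rfl fun l _ => hce l

lemma sum_evl (A : Matrix (Fin p) (Fin m) ℝ) :
    ∑ k, evl A k = ∑ i, ∑ j, A i j ^ 2 := by
  calc ∑ k, evl A k = ∑ k, ∑ i, (A *ᵥ ebv A k) i * (A *ᵥ ebv A k) i := by
        refine Finset.sum_congr rfl fun k _ => ?_
        have h := av_dot_eig A k k; rw [if_pos rfl] at h; exact h.symm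
    _ = ∑ i, ∑ j, A i j * A i j := pair A A A
    _ = ∑ i, ∑ j, A i j ^ 2 := by simp [sq]

lemma card_nonzero (A : Matrix (Fin p) (Fin m) ℝ) :
    (Finset.univ.filter (fun k => evl A k ≠ 0)).card = A.rank := by
  rw [← Matrix.rank_conjTranspose_mul_self A, Matrix.conjTranspose_eq_transpose_of_trivial,
    (Matrix.isHermitian_transpose_mul_self A).rank_eq_card_non_zero_eigs,
    Fintype.card_subtype]
  rfl

lemma nuc_val_le_sqrt_rank (A : Matrix (Fin p) (Fin m) ℝ) :
    ∑ k, Real.sqrt (evl A k)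
      ≤ Real.sqrt (A.rank) * Real.sqrt (∑ i, ∑ j, A i j ^ 2) := by
  set s := Finset.univ.filter (fun k => evl A k ≠ 0) with hsdef
  have hres : ∑ k, Real.sqrt (evl A k) = ∑ k ∈ s, Real.sqrt (evl A k) := by
    refine (Finset.sum_subset (Finset.subset_univ s) ?_).symm
    intro k _ hk
    have : evl A k = 0 := by
      by_contra hne
      exact hk (Finset.mem_filter.mpr ⟨Finset.mem_univ k, hne⟩)
    simp [this]
  have h0 : (0:ℝ) ≤ ∑ k, Real.sqrt (evl A k) :=
    Finset.sum_nonneg fun k _ => Real.sqrt_nonneg _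
  have hsq : (∑ k, Real.sqrt (evl A k)) ^ 2 ≤ (A.rank : ℝ) * ∑ i, ∑ j, A i j ^ 2 := by
    rw [hres]
    calc (∑ k ∈ s, Real.sqrt (evl A k)) ^ 2
        = (∑ k ∈ s, 1 * Real.sqrt (evl A k)) ^ 2 := by simp
      _ ≤ (∑ k ∈ s, (1:ℝ) ^ 2) * ∑ k ∈ s, Real.sqrt (evl A k) ^ 2 :=
          Finset.sum_mul_sq_le_sq_mul_sq s _ _
      _ = (s.card : ℝ) * ∑ k ∈ s, evl A k := by
          simp [Real.sq_sqrt (evl_nonneg A _)]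
      _ ≤ (s.card : ℝ) * ∑ k, evl A k := by
          refine mul_le_mul_of_nonneg_left ?_ (Nat.cast_nonneg _)
          exact Finset.sum_le_sum_of_subset_of_nonneg (Finset.subset_univ s)
            (fun k _ _ => evl_nonneg A k)
      _ = (A.rank : ℝ) * ∑ i, ∑ j, A i j ^ 2 := by
          rw [hsdef, card_nonzero, sum_evl]
  calc ∑ k, Real.sqrt (evl A k) = Real.sqrt ((∑ k, Real.sqrt (evl A k)) ^ 2) :=
        (Real.sqrt_sq h0).symm
    _ ≤ Real.sqrt ((A.rank : ℝ) * ∑ i, ∑ j, A i j ^ 2) := Real.sqrt_le_sqrt hsq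
    _ = Real.sqrt (A.rank) * Real.sqrt (∑ i, ∑ j, A i j ^ 2) :=
        Real.sqrt_mul (Nat.cast_nonneg _) _

lemma matrank_add_le (X Y : Matrix (Fin p) (Fin m) ℝ) :
    (X + Y).rank ≤ X.rank + Y.rank := by
  have hr : LinearMap.range (X + Y).mulVecLin
      ≤ LinearMap.range X.mulVecLin ⊔ LinearMap.range Y.mulVecLin := by
    rintro _ ⟨v, rfl⟩
    rw [Matrix.mulVecLin_apply, Matrix.add_mulVec]
    exact Submodule.add_mem_sup ⟨v, rfl⟩ ⟨v, rfl⟩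
  calc (X + Y).rank
      ≤ Module.finrank ℝ ↥(LinearMap.range X.mulVecLin ⊔ LinearMap.range Y.mulVecLin) :=
        Submodule.finrank_mono hr
    _ ≤ X.rank + Y.rank :=
        Submodule.finrank_add_le_finrank_add_finrank _ _

end NucProof


open NucProof in
lemma nucNorm_eval {p m : ℕ} (A : Matrix (Fin p) (Fin m) ℝ) :
    nucNorm A = ∑ k, Real.sqrt (evl A k) := rfl

open NucProof in
lemma nucNorm_triangle {p m : ℕ} (X Y : Matrix (Fin p) (Fin m) ℝ) :
    nucNorm (X + Y) ≤ nucNorm X + nucNorm Y := by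
  obtain ⟨Q, hQ, hval⟩ := exists_dual (X + Y)
  rw [nucNorm_eval, ← hval]
  have h2 : ∑ i, ∑ j, Q i j * (X + Y) i j
      = (∑ i, ∑ j, Q i j * X i j) + ∑ i, ∑ j, Q i j * Y i j := by
    rw [← Finset.sum_add_distrib]
    refine Finset.sum_congr rfl fun i _ => ?_
    rw [← Finset.sum_add_distrib]
    refine Finset.sum_congr rfl fun j _ => ?_
    simp [Matrix.add_apply]; ring
  rw [h2, nucNorm_eval X, nucNorm_eval Y]
  exact add_le_add (dual_le X Q hQ) (dual_le Y Q hQ)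

open NucProof in
lemma nucNorm_le_sqrt_rank {p m : ℕ} (A : Matrix (Fin p) (Fin m) ℝ) :
    nucNorm A ≤ Real.sqrt (A.rank) * froNorm A := by
  rw [nucNorm_eval]
  exact nuc_val_le_sqrt_rank A

lemma froNorm_nonneg {p m : ℕ} (A : Matrix (Fin p) (Fin m) ℝ) : 0 ≤ froNorm A :=
  Real.sqrt_nonneg _

lemma rank_eq_of_range {p q : ℕ} (P : Matrix (Fin p) (Fin p) ℝ)
    (G : Matrix (Fin p) (Fin q) ℝ) (hidem : P * P = P)
    (hrange : ∀ v : Fin p → ℝ, P.mulVec v = v ↔ v ∈ Set.range G.mulVec) :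
    P.rank = G.rank := by
  have hr : LinearMap.range P.mulVecLin = LinearMap.range G.mulVecLin := by
    apply le_antisymm
    · rintro _ ⟨x, rfl⟩
      rw [Matrix.mulVecLin_apply]
      have hfix : P *ᵥ (P *ᵥ x) = P *ᵥ x := by rw [Matrix.mulVec_mulVec, hidem]
      obtain ⟨y, hy⟩ := (hrange (P *ᵥ x)).mp hfix
      exact ⟨y, hy⟩
    · rintro _ ⟨x, rfl⟩
      rw [Matrix.mulVecLin_apply]
      exact ⟨G *ᵥ x, (hrange _).mpr ⟨x, rfl⟩⟩
  rw [Matrix.rank, Matrix.rank, hr]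

/-- if rank Γ = r and β > 0 satisfies β‖P_Γ(Δ)‖_F ≤ ‖Δ‖_{L2(Π)} on K(Γ;3),
then every Δ ∈ K(Γ;3) satisfies ‖Δ‖_* ≤ (4√(2r)/β)‖Δ‖_{L2(Π)}. -/
theorem nuclear_norm_cone_bound {p m : ℕ} (hm : 0 < m)
    (Pix : Measure (Fin p → ℝ)) [IsProbabilityMeasure Pix]
    (Γ : Matrix (Fin p) (Fin m) ℝ) (r : ℕ) (hr : Γ.rank = r)
    (P₁ : Matrix (Fin p) (Fin p) ℝ) (P₂ : Matrix (Fin m) (Fin m) ℝ)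
    (hP₁sym : P₁ᵀ = P₁) (hP₁idem : P₁ * P₁ = P₁)
    (hP₁range : ∀ v : Fin p → ℝ, P₁.mulVec v = v ↔ v ∈ Set.range Γ.mulVec)
    (hP₂sym : P₂ᵀ = P₂) (hP₂idem : P₂ * P₂ = P₂)
    (hP₂range : ∀ v : Fin m → ℝ, P₂.mulVec v = v ↔ v ∈ Set.range Γᵀ.mulVec)
    (β : ℝ) (hβ : 0 < β)
    (hβprop : ∀ Δ ∈ coneK P₁ P₂ 3, β * froNorm (Pproj P₁ P₂ Δ) ≤ L2Pi Pix Δ) :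
    ∀ Δ ∈ coneK P₁ P₂ 3,
      nucNorm Δ ≤ (4 * Real.sqrt (2 * r) / β) * L2Pi Pix Δ := by
  intro Δ hΔ
  have hcone : nucNorm (Pperp P₁ P₂ Δ) ≤ 3 * nucNorm (Pproj P₁ P₂ Δ) := hΔ
  have hsplit : Δ = Pproj P₁ P₂ Δ + Pperp P₁ P₂ Δ := by
    rw [Pproj]; exact (sub_add_cancel _ _).symm
  have h4 : nucNorm Δ ≤ 4 * nucNorm (Pproj P₁ P₂ Δ) := by
    calc nucNorm Δ = nucNorm (Pproj P₁ P₂ Δ + Pperp P₁ P₂ Δ) := by rw [← hsplit]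
      _ ≤ nucNorm (Pproj P₁ P₂ Δ) + nucNorm (Pperp P₁ P₂ Δ) := nucNorm_triangle _ _
      _ ≤ 4 * nucNorm (Pproj P₁ P₂ Δ) := by linarith
  have hrank1 : P₁.rank = r := by rw [rank_eq_of_range P₁ Γ hP₁idem hP₁range, hr]
  have hrank2 : P₂.rank = r := by
    rw [rank_eq_of_range P₂ Γᵀ hP₂idem hP₂range, Matrix.rank_transpose, hr]
  have hdecomp : Pproj P₁ P₂ Δ = P₁ * Δ + (1 - P₁) * Δ * P₂ := by
    rw [Pproj, Pperp]
    simp only [Matrix.mul_sub, Matrix.sub_mul, Matrix.mul_one, Matrix.one_mul]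
    abel
  have hrankPp : (Pproj P₁ P₂ Δ).rank ≤ 2 * r := by
    calc (Pproj P₁ P₂ Δ).rank = (P₁ * Δ + (1 - P₁) * Δ * P₂).rank := by rw [hdecomp]
      _ ≤ (P₁ * Δ).rank + ((1 - P₁) * Δ * P₂).rank := NucProof.matrank_add_le _ _
      _ ≤ P₁.rank + P₂.rank :=
          add_le_add (Matrix.rank_mul_le_left _ _) (Matrix.rank_mul_le_right _ _)
      _ = 2 * r := by rw [hrank1, hrank2]; ring
  have hnuc : nucNorm (Pproj P₁ P₂ Δ) ≤ Real.sqrt (2 * r) * froNorm (Pproj P₁ P₂ Δ) := by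
    refine (nucNorm_le_sqrt_rank _).trans ?_
    refine mul_le_mul_of_nonneg_right ?_ (froNorm_nonneg _)
    apply Real.sqrt_le_sqrt
    exact_mod_cast hrankPp
  have hfro : froNorm (Pproj P₁ P₂ Δ) ≤ L2Pi Pix Δ / β := by
    rw [le_div_iff₀ hβ, mul_comm]
    exact hβprop Δ hΔ
  have hs : (0:ℝ) ≤ Real.sqrt (2 * r) := Real.sqrt_nonneg _
  calc nucNorm Δ ≤ 4 * nucNorm (Pproj P₁ P₂ Δ) := h4
    _ ≤ 4 * (Real.sqrt (2 * r) * froNorm (Pproj P₁ P₂ Δ)) := by linarith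
    _ ≤ 4 * (Real.sqrt (2 * r) * (L2Pi Pix Δ / β)) := by
        have := mul_le_mul_of_nonneg_left hfro hs
        linarith
    _ = (4 * Real.sqrt (2 * r) / β) * L2Pi Pix Δ := by field_simp
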